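/- Any two demicaps in (ZMod 3)^4 are equivalent under an invertible affine transformation. -/
import Mathlib

abbrev V4 := Fin 4 → ZMod 3

def IsCap (C : Set V4) : Prop :=
  ∀ a ∈ C, ∀ b ∈ C, ∀ c ∈ C, a ≠ b → a ≠ c → b ≠ c → a + b + c ≠ 0

/-- A demicap with anchor `a`. -/
def IsDemicap (a : V4) (D : Set V4) : Prop :=
  D.ncard = 10 ∧ IsCap D ∧
  ∃ d d' : Fin 5 → V4,
    (∀ i, a + d i + d' i = 0) ∧
    D = Set.range d ∪ Set.range d' ∧
    ¬ ∃ s : Finset (Fin 5), s.card = 4 ∧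
      ∃ W : Submodule (ZMod 3) V4, Module.finrank (ZMod 3) W = 3 ∧
        ∀ i ∈ s, d i - a ∈ W

noncomputable section DemicapAux

open Module Set

private def uvec : V4 := fun _ => 1

private def vcan : Fin 5 → V4 := fun i =>
  if h : (i : ℕ) < 4 then Pi.single (⟨i, h⟩ : Fin 4) 1 else uvec

private def Dcan : Set V4 := ⋃ i : Fin 5, ({vcan i, -vcan i} : Set V4)

private lemma finrank_V4 : Module.finrank (ZMod 3) V4 = 4 := by
  simp [V4]

private lemma zmod3_aux : ∀ z : ZMod 3, z ≠ 0 → z⁻¹ = 1 ∨ z⁻¹ = -1 := by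
  intro z hz
  have h2 : z = 1 ∨ z = 2 := by revert hz; revert z; decide
  rcases h2 with rfl | rfl
  · left; exact inv_one
  · right; exact inv_eq_of_mul_eq_one_right (by decide)

private lemma zmod3_line : ∀ a x y : ZMod 3, a + x + y = 0 → y - a = -(x - a) := by decide

private lemma demicap_canonical (a : V4) (D : Set V4) (h : IsDemicap a D) :
    ∃ (A : V4 ≃ₗ[ZMod 3] V4) (b : V4), (fun x => A x + b) '' D = Dcan := by
  obtain ⟨-, -, d, d', hdd', hD, hnW⟩ := h
  set f : Fin 5 → V4 := fun i => d i - a with hfdef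
  set g : Fin 4 → V4 := fun j => f j.castSucc with hgdef
  -- Step 1: the first four direction vectors are linearly independent
  have hind : LinearIndependent (ZMod 3) g := by
    by_contra hg
    have hspan : Submodule.span (ZMod 3) (Set.range g) < ⊤ := by
      rcases lt_or_eq_of_le (le_top : Submodule.span (ZMod 3) (Set.range g) ≤ ⊤) with h' | h'
      · exact h'
      · exact absurd (linearIndependent_of_top_le_span_of_card_eq_finrank h'.ge
          (by simp [finrank_V4])) hg
    obtain ⟨φ, hφ, hle⟩ := Submodule.exists_le_ker_of_lt_top _ hspan
    obtain ⟨x, hx⟩ : ∃ x, φ x ≠ 0 := by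
      by_contra hmm
      push_neg at hmm
      exact hφ (LinearMap.ext fun x => hmm x)
    have hrange : LinearMap.range φ = ⊤ := by
      rw [LinearMap.range_eq_top]
      intro y
      exact ⟨(y * (φ x)⁻¹) • x, by
        simp [smul_eq_mul, mul_assoc, inv_mul_cancel₀ hx]⟩
    have hrk := LinearMap.finrank_range_add_finrank_ker φ
    rw [hrange, finrank_top, Module.finrank_self, finrank_V4] at hrk
    refine hnW ⟨Finset.univ.erase (Fin.last 4), by simp, LinearMap.ker φ, by omega, ?_⟩
    intro i hi
    have hine : i ≠ Fin.last 4 := Finset.ne_of_mem_erase hi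
    have hig : d i - a = g (i.castPred hine) := by
      simp [hgdef, hfdef, Fin.castSucc_castPred]
    rw [hig]
    exact hle (Submodule.subset_span ⟨_, rfl⟩)
  -- Step 2: basis, coordinates
  have hcard : Fintype.card (Fin 4) = Module.finrank (ZMod 3) V4 := by simp [finrank_V4]
  let B : Basis (Fin 4) (ZMod 3) V4 := basisOfLinearIndependentOfCardEqFinrank hind hcard
  have hB : ∀ j, B j = g j := fun j => by
    rw [show B = basisOfLinearIndependentOfCardEqFinrank hind hcard from rfl,
      coe_basisOfLinearIndependentOfCardEqFinrank]
  let A : V4 ≃ₗ[ZMod 3] V4 := B.equivFun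
  set c : Fin 4 → ZMod 3 := A (f (Fin.last 4)) with hcdef
  -- Step 3: all coordinates of the fifth vector are nonzero
  have hc : ∀ j, c j ≠ 0 := by
    intro j hj
    have hsub : LinearIndependent (ZMod 3) (fun i : {i : Fin 4 // i ≠ j} => g i) :=
      hind.comp _ Subtype.val_injective
    set W := Submodule.span (ZMod 3)
      (Set.range fun i : {i : Fin 4 // i ≠ j} => g i) with hWdef
    have hWrank : Module.finrank (ZMod 3) W = 3 := by
      rw [hWdef, finrank_span_eq_card hsub]
      simp [Fintype.card_subtype_compl]
    have hgW : ∀ i : Fin 4, i ≠ j → g i ∈ W := fun i hi =>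
      Submodule.subset_span ⟨⟨i, hi⟩, rfl⟩
    have hf4 : f (Fin.last 4) ∈ W := by
      have hsum : ∑ i, c i • B i = f (Fin.last 4) := B.sum_equivFun _
      rw [← hsum]
      refine Submodule.sum_mem _ fun i _ => ?_
      by_cases hij : i = j
      · subst hij; rw [hj]; simp
      · exact Submodule.smul_mem _ _ (by rw [hB]; exact hgW i hij)
    refine hnW ⟨Finset.univ.erase (Fin.castSucc j), by simp, W, hWrank, ?_⟩
    intro i hi
    have hine : i ≠ Fin.castSucc j := Finset.ne_of_mem_erase hi
    by_cases hlast : i = Fin.last 4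
    · subst hlast
      exact hf4
    · have hpj : i.castPred hlast ≠ j := by
        intro hcontra
        exact hine (by rw [← Fin.castSucc_castPred i hlast, hcontra])
      have hig : d i - a = g (i.castPred hlast) := by
        simp [hgdef, hfdef, Fin.castSucc_castPred]
      rw [hig]
      exact hgW _ hpj
  -- Step 4: the scaling equivalence
  let S : V4 ≃ₗ[ZMod 3] V4 := LinearEquiv.piCongrRight fun k =>
    LinearEquiv.smulOfNeZero (ZMod 3) (ZMod 3) ((c k)⁻¹) (inv_ne_zero (hc k))
  have hS : ∀ (x : V4) (k : Fin 4), S x k = (c k)⁻¹ * x k := fun x k => rfl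
  let M : V4 ≃ₗ[ZMod 3] V4 := A.trans S
  have hM : ∀ x : V4, M x = S (A x) := fun x => rfl
  -- values of M on the direction vectors
  have hMg : ∀ j : Fin 4, M (g j) = (c j)⁻¹ • (Pi.single j 1 : V4) := by
    intro j
    have h1 : A (g j) = Pi.single j (1 : ZMod 3) := by
      rw [← hB j]
      funext k
      rw [show A (B j) k = B.equivFun (B j) k from rfl, B.equivFun_self]
      simp [Pi.single_apply, eq_comm]
    funext k
    rw [hM, h1, hS]
    by_cases hkj : k = j <;> simp [Pi.single_apply, hkj]
  have hM4 : M (f (Fin.last 4)) = uvec := by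
    funext k
    rw [hM, ← hcdef, hS]
    exact inv_mul_cancel₀ (hc k)
  -- M sends each line direction to ± the canonical one
  have hv : ∀ i : Fin 5, M (f i) = vcan i ∨ M (f i) = -vcan i := by
    intro i
    by_cases hlast : i = Fin.last 4
    · left
      subst hlast
      rw [hM4]
      simp [vcan]
    · have hval : (i : ℕ) < 4 := by
        have := Fin.val_lt_last hlast
        omega
      set j := i.castPred hlast with hjdef
      have hfg : f i = g j := by
        rw [hgdef]
        simp [hjdef, Fin.castSucc_castPred]
      have hvj : vcan i = (Pi.single j 1 : V4) := by
        rw [vcan]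
        simp only [hval, dif_pos]
        congr 1
      rw [hfg, hMg j, hvj]
      rcases zmod3_aux (c j) (hc j) with h1 | h1 <;> rw [h1]
      · left; rw [one_smul]
      · right; rw [neg_one_smul]
  -- relating the points of D to M-images
  have hline : ∀ i, d' i - a = -(f i) := by
    intro i
    funext k
    have := congrFun (hdd' i) k
    exact zmod3_line (a k) (d i k) (d' i k) this
  refine ⟨M, -(M a), ?_⟩
  have hmd : ∀ i, M (d i) + -(M a) = M (f i) := fun i => by
    rw [← sub_eq_add_neg, ← map_sub]
  have hmd' : ∀ i, M (d' i) + -(M a) = -(M (f i)) := fun i => by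
    rw [← sub_eq_add_neg, ← map_sub, hline i, map_neg]
  ext x
  simp only [Set.mem_image, hD, Set.mem_union, Set.mem_range, Dcan, Set.mem_iUnion,
    Set.mem_insert_iff, Set.mem_singleton_iff]
  constructor
  · rintro ⟨y, (⟨i, rfl⟩ | ⟨i, rfl⟩), rfl⟩
    · refine ⟨i, ?_⟩
      rw [hmd i]
      rcases hv i with h1 | h1 <;> rw [h1]
      · left; rfl
      · right; rfl
    · refine ⟨i, ?_⟩
      rw [hmd' i]
      rcases hv i with h1 | h1 <;> rw [h1]
      · right; rfl
      · left; rw [neg_neg]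
  · rintro ⟨i, rfl | rfl⟩
    · rcases hv i with h1 | h1
      · exact ⟨d i, Or.inl ⟨i, rfl⟩, by rw [hmd i, h1]⟩
      · exact ⟨d' i, Or.inr ⟨i, rfl⟩, by rw [hmd' i, h1, neg_neg]⟩
    · rcases hv i with h1 | h1
      · exact ⟨d' i, Or.inr ⟨i, rfl⟩, by rw [hmd' i, h1]⟩
      · exact ⟨d i, Or.inl ⟨i, rfl⟩, by rw [hmd i, h1]⟩

end DemicapAux

/-- Any two demicaps are equivalent under an invertible affine transformation. -/
theorem demicaps_affinely_equivalent (a₁ a₂ : V4) (D₁ D₂ : Set V4)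
    (h₁ : IsDemicap a₁ D₁) (h₂ : IsDemicap a₂ D₂) :
    ∃ (A : V4 ≃ₗ[ZMod 3] V4) (b : V4), (fun x => A x + b) '' D₁ = D₂ := by
  obtain ⟨A₁, b₁, hA₁⟩ := demicap_canonical a₁ D₁ h₁
  obtain ⟨A₂, b₂, hA₂⟩ := demicap_canonical a₂ D₂ h₂
  refine ⟨A₁.trans A₂.symm, A₂.symm (b₁ - b₂), ?_⟩
  have hinj : Function.Injective (fun x : V4 => A₂ x + b₂) := by
    intro x y hxy
    exact A₂.injective (add_right_cancel hxy)
  apply (Set.image_injective.mpr hinj)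
  rw [hA₂, ← hA₁, ← Set.image_comp]
  have hfun : ((fun x => A₂ x + b₂) ∘ fun x => (A₁.trans A₂.symm) x + A₂.symm (b₁ - b₂))
      = fun x => A₁ x + b₁ := by
    funext x
    show A₂ ((A₁.trans A₂.symm) x + A₂.symm (b₁ - b₂)) + b₂ = A₁ x + b₁
    rw [map_add, LinearEquiv.trans_apply, A₂.apply_symm_apply, A₂.apply_symm_apply,
      add_assoc, sub_add_cancel]
  rw [hfun]
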